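/- Let Z be a nonnegative random variable and suppose there are constants ε₀ ∈ (0,1], c > 0, α₂ > 0, β₂ > α₂, and nonnegative random variables Y_ε (0 < ε ≤ ε₀) such that Z ≥ c ε^{α₂} - Y_ε for all ε ∈ (0, ε₀], and for every q ≥ 1 there is C_q with E[Y_ε^q] ≤ C_q ε^{β₂ q}. Then for every p ≥ 1, E[Z^{-p}] < ∞. -/

import Mathlib

open MeasureTheory Real
open scoped ENNReal
noncomputable section

/-- Negative-moment criterion (one-term version of Dalang–Khoshnevisan–Nualart,
Proposition 3.5): if `Z ≥ 0` satisfies `Z ≥ c ε^{α₂} - Y_ε` a.s. for all `ε ∈ (0, ε₀]`,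
where the nonnegative random variables `Y_ε` satisfy `E[Y_ε^q] ≤ C_q ε^{β₂ q}` for all
`q ≥ 1` with `β₂ > α₂ > 0`, then `E[Z^{-p}] < ∞` for every `p ≥ 1`. -/
theorem negative_moment_criterion
    {Ω : Type*} [MeasurableSpace Ω] (P : Measure Ω) [IsProbabilityMeasure P]
    (Z : Ω → ℝ) (Y : ℝ → Ω → ℝ)
    (ε₀ c α₂ β₂ : ℝ) (hε₀ : 0 < ε₀) (hε₀1 : ε₀ ≤ 1) (hc : 0 < c)
    (hα₂ : 0 < α₂) (hβ₂ : α₂ < β₂)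
    (hZ0 : ∀ ω, 0 ≤ Z ω)
    (hY0 : ∀ ε ω, 0 ≤ Y ε ω)
    (hZY : ∀ ε : ℝ, 0 < ε → ε ≤ ε₀ → ∀ᵐ ω ∂P, c * ε ^ α₂ - Y ε ω ≤ Z ω)
    (hmom : ∀ q : ℝ, 1 ≤ q → ∃ C : ℝ, ∀ ε : ℝ, 0 < ε → ε ≤ ε₀ →
      (∫⁻ ω, ENNReal.ofReal ((Y ε ω) ^ q) ∂P) ≤ ENNReal.ofReal (C * ε ^ (β₂ * q))) :
    ∀ p : ℝ, 1 ≤ p → (∫⁻ ω, ENNReal.ofReal ((Z ω) ^ (-p)) ∂P) < ⊤ := by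
  intro p hp
  classical
  have hp0 : 0 < p := lt_of_lt_of_le one_pos hp
  set d : ℝ := c / 2 with hd_def
  have hd : 0 < d := by positivity
  set q : ℝ := max 1 ((α₂ * p + 1) / (β₂ - α₂)) with hq_def
  have hq1 : 1 ≤ q := le_max_left _ _
  have hq0 : (0:ℝ) ≤ q := le_trans zero_le_one hq1
  have hβα : 0 < β₂ - α₂ := sub_pos.mpr hβ₂
  have hqr : α₂ * p + 1 ≤ (β₂ - α₂) * q := by
    have h1 : (α₂ * p + 1) / (β₂ - α₂) ≤ q := le_max_right _ _
    calc α₂ * p + 1 = (β₂ - α₂) * ((α₂ * p + 1) / (β₂ - α₂)) := by field_simp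
      _ ≤ (β₂ - α₂) * q := by nlinarith
  obtain ⟨C₀, hC₀⟩ := hmom q hq1
  set C : ℝ := max C₀ 0 + 1 with hC_def
  have hCpos : 0 < C := by positivity
  have hC : ∀ ε : ℝ, 0 < ε → ε ≤ ε₀ →
      (∫⁻ ω, ENNReal.ofReal ((Y ε ω) ^ q) ∂P) ≤ ENNReal.ofReal (C * ε ^ (β₂ * q)) := by
    intro ε h1 h2
    refine (hC₀ ε h1 h2).trans (ENNReal.ofReal_le_ofReal ?_)
    have hnn : (0:ℝ) ≤ ε ^ (β₂ * q) := Real.rpow_nonneg h1.le _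
    have : C₀ ≤ C := by
      have := le_max_left C₀ (0:ℝ); linarith
    nlinarith
  -- dyadic scales
  set ε' : ℕ → ℝ := fun n => ε₀ * (2:ℝ) ^ (-(n:ℝ)) with hε'_def
  have hε'pos : ∀ n, 0 < ε' n := fun n => mul_pos hε₀ (Real.rpow_pos_of_pos two_pos _)
  have hε'le : ∀ n, ε' n ≤ ε₀ := by
    intro n
    have h1 : (2:ℝ) ^ (-(n:ℝ)) ≤ 1 :=
      Real.rpow_le_one_of_one_le_of_nonpos one_le_two (neg_nonpos.mpr (Nat.cast_nonneg n))
    simp only [hε'_def]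
    nlinarith
  set a : ℕ → ℝ := fun n => d * (ε' n) ^ α₂ with ha_def
  have hapos : ∀ n, 0 < a n := fun n => mul_pos hd (Real.rpow_pos_of_pos (hε'pos n) _)
  have haanti : ∀ n m : ℕ, n ≤ m → a m ≤ a n := by
    intro n m h
    have h2 : (2:ℝ) ^ (-(m:ℝ)) ≤ (2:ℝ) ^ (-(n:ℝ)) :=
      Real.rpow_le_rpow_of_exponent_le one_le_two
        (neg_le_neg (by exact_mod_cast h))
    have h1 : ε' m ≤ ε' n := by
      simp only [hε'_def]
      nlinarith
    exact mul_le_mul_of_nonneg_left (Real.rpow_le_rpow (hε'pos m).le h1 hα₂.le) hd.le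
  -- measurable minorant of Z^{-p}
  obtain ⟨g, hgm, hgle, hgeq⟩ :=
    exists_measurable_le_lintegral_eq P (fun ω => ENNReal.ofReal ((Z ω) ^ (-p)))
  set b : ℕ → ℝ≥0∞ := fun n => ENNReal.ofReal ((a n) ^ (-p)) with hb_def
  have hbmono : ∀ n m : ℕ, n ≤ m → b n ≤ b m := fun n m h =>
    ENNReal.ofReal_le_ofReal
      (Real.rpow_le_rpow_of_nonpos (hapos m) (haanti n m h) (neg_nonpos.mpr hp0.le))
  have hbne : ∀ n, b n ≠ 0 := fun n =>
    (ENNReal.ofReal_pos.mpr (Real.rpow_pos_of_pos (hapos n) _)).ne'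
  set T : ℕ → Set Ω := fun n => {ω | b n < g ω} with hT_def
  have hTm : ∀ n, MeasurableSet (T n) := fun n => measurableSet_lt measurable_const hgm
  have hTsub : ∀ n ω, ω ∈ T n → Z ω < a n := by
    intro n ω hω
    have h1 : b n < ENNReal.ofReal ((Z ω) ^ (-p)) := lt_of_lt_of_le hω (hgle ω)
    have hZp : (a n) ^ (-p) < (Z ω) ^ (-p) := by
      by_contra hcon
      push_neg at hcon
      exact absurd h1 (not_lt.mpr (ENNReal.ofReal_le_ofReal hcon))
    have hZpos : 0 < Z ω := by
      rcases lt_or_eq_of_le (hZ0 ω) with h | h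
      · exact h
      · exfalso
        rw [← h, Real.zero_rpow (by linarith : -p ≠ 0)] at hZp
        exact absurd hZp (not_lt.mpr (Real.rpow_nonneg (hapos n).le _))
    by_contra hcon
    push_neg at hcon
    exact absurd hZp
      (not_lt.mpr (Real.rpow_le_rpow_of_nonpos (hapos n) hcon (neg_nonpos.mpr hp0.le)))
  -- pointwise layer-cake bound
  have hpt : ∀ ω, g ω ≤ b 0 + ∑' n, (T n).indicator (fun _ => b (n + 1)) ω := by
    intro ω
    by_cases hex : ∃ m, g ω ≤ b m
    · have hm := Nat.find_spec hex
      by_cases h0 : g ω ≤ b 0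
      · exact le_trans h0 le_self_add
      · have hfind0 : Nat.find hex ≠ 0 := by
          intro h; rw [h] at hm; exact h0 hm
        obtain ⟨k, hk⟩ := Nat.exists_eq_succ_of_ne_zero hfind0
        have hkmem : ω ∈ T k := not_le.mp (Nat.find_min hex (by omega))
        calc g ω ≤ b (k + 1) := by rw [hk] at hm; exact hm
          _ = (T k).indicator (fun _ => b (k + 1)) ω := by
              rw [Set.indicator_of_mem hkmem]
          _ ≤ ∑' n, (T n).indicator (fun _ => b (n + 1)) ω := ENNReal.le_tsum k
          _ ≤ b 0 + ∑' n, (T n).indicator (fun _ => b (n + 1)) ω := le_add_self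
    · push_neg at hex
      have hmem : ∀ n, ω ∈ T n := fun n => hex n
      have htop : ∑' n, (T n).indicator (fun _ => b (n + 1)) ω = ⊤ := by
        have h1 : ∀ n : ℕ, b 1 ≤ (T n).indicator (fun _ => b (n + 1)) ω := by
          intro n
          rw [Set.indicator_of_mem (hmem n)]
          exact hbmono 1 (n + 1) (by omega)
        have h2 : (⊤ : ℝ≥0∞) ≤ ∑' n, (T n).indicator (fun _ => b (n + 1)) ω := by
          calc (⊤ : ℝ≥0∞) = ∑' _ : ℕ, b 1 :=
                (ENNReal.tsum_const_eq_top_of_ne_zero (hbne 1)).symm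
            _ ≤ _ := ENNReal.tsum_le_tsum h1
        exact top_le_iff.mp h2
      rw [htop]
      simp
  -- Chebyshev/Markov bound on P (T n)
  have hmarkov : ∀ n, ENNReal.ofReal ((a n) ^ q) * P (T n)
      ≤ ENNReal.ofReal (C * (ε' n) ^ (β₂ * q)) := by
    intro n
    have hae := hZY (ε' n) (hε'pos n) (hε'le n)
    set N := toMeasurable P {ω | ¬ (c * (ε' n) ^ α₂ - Y (ε' n) ω ≤ Z ω)} with hN_def
    have hNnull : P N = 0 := by
      rw [hN_def, measure_toMeasurable]
      exact ae_iff.mp hae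
    set S := T n \ N with hS_def
    have hSm : MeasurableSet S := (hTm n).diff (measurableSet_toMeasurable _ _)
    have hSμ : P S = P (T n) := measure_diff_null hNnull
    have hca : c * (ε' n) ^ α₂ = 2 * a n := by
      simp only [ha_def, hd_def]; ring
    have hind : ∀ ω, S.indicator (fun _ => ENNReal.ofReal ((a n) ^ q)) ω
        ≤ ENNReal.ofReal ((Y (ε' n) ω) ^ q) := by
      intro ω
      by_cases hω : ω ∈ S
      · rw [Set.indicator_of_mem hω]
        obtain ⟨hT', hN'⟩ := hω
        have hineq : c * (ε' n) ^ α₂ - Y (ε' n) ω ≤ Z ω := by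
          by_contra hcon
          exact hN' (subset_toMeasurable _ _ hcon)
        have hZlt := hTsub n ω hT'
        have hY : a n ≤ Y (ε' n) ω := by linarith [hca ▸ hineq]
        exact ENNReal.ofReal_le_ofReal (Real.rpow_le_rpow (hapos n).le hY hq0)
      · rw [Set.indicator_of_notMem hω]; exact zero_le
    calc ENNReal.ofReal ((a n) ^ q) * P (T n)
        = ENNReal.ofReal ((a n) ^ q) * P S := by rw [hSμ]
      _ = ∫⁻ ω, S.indicator (fun _ => ENNReal.ofReal ((a n) ^ q)) ω ∂P :=
          (lintegral_indicator_const hSm _).symm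
      _ ≤ ∫⁻ ω, ENNReal.ofReal ((Y (ε' n) ω) ^ q) ∂P := lintegral_mono hind
      _ ≤ _ := hC (ε' n) (hε'pos n) (hε'le n)
  -- real-number algebra for the summand bound
  set K : ℝ := C * d ^ (-p) * (d ^ q)⁻¹ * ε₀ ^ ((β₂ - α₂) * q - α₂ * p) * (2:ℝ) ^ (α₂ * p)
    with hK_def
  have hKpos : 0 < K := by positivity
  have hloga : ∀ m : ℕ, Real.log (a m)
      = Real.log d + α₂ * Real.log ε₀ + α₂ * (-(m:ℝ)) * Real.log 2 := by
    intro m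
    simp only [ha_def, hε'_def]
    rw [Real.log_mul hd.ne' (by positivity), Real.log_rpow (by positivity),
      Real.log_mul hε₀.ne' (by positivity), Real.log_rpow two_pos]
    ring
  have hlogε : ∀ n : ℕ, Real.log (ε' n) = Real.log ε₀ + (-(n:ℝ)) * Real.log 2 := by
    intro n
    simp only [hε'_def]
    rw [Real.log_mul hε₀.ne' (by positivity), Real.log_rpow two_pos]
  have halg : ∀ n : ℕ, (a (n + 1)) ^ (-p) / (a n) ^ q * (C * (ε' n) ^ (β₂ * q))
      ≤ K * (2:ℝ) ^ (-(n:ℝ)) := by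
    intro n
    have hL : 0 < (a (n + 1)) ^ (-p) / (a n) ^ q * (C * (ε' n) ^ (β₂ * q)) := by
      have := hapos (n + 1); have := hapos n; have := hε'pos n
      positivity
    have hR : 0 < K * (2:ℝ) ^ (-(n:ℝ)) := by positivity
    rw [← Real.log_le_log_iff hL hR]
    have l2 : 0 < Real.log 2 := Real.log_pos one_lt_two
    have e1 : Real.log ((a (n + 1)) ^ (-p) / (a n) ^ q * (C * (ε' n) ^ (β₂ * q)))
        = (-p) * Real.log (a (n + 1)) - q * Real.log (a n) + Real.log C
          + (β₂ * q) * Real.log (ε' n) := by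
      rw [Real.log_mul (by positivity) (by positivity),
        Real.log_div (by positivity) (by positivity),
        Real.log_mul hCpos.ne' (by positivity),
        Real.log_rpow (hapos (n + 1)), Real.log_rpow (hapos n),
        Real.log_rpow (hε'pos n)]
      ring
    have e2 : Real.log (K * (2:ℝ) ^ (-(n:ℝ)))
        = Real.log C + (-p) * Real.log d - q * Real.log d
          + ((β₂ - α₂) * q - α₂ * p) * Real.log ε₀ + (α₂ * p) * Real.log 2
          + (-(n:ℝ)) * Real.log 2 := by
      rw [hK_def,
        Real.log_mul (by positivity) (by positivity),
        Real.log_mul (by positivity) (by positivity),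
        Real.log_mul (by positivity) (by positivity),
        Real.log_mul (by positivity) (by positivity),
        Real.log_mul (by positivity) (by positivity),
        Real.log_rpow hd, Real.log_inv, Real.log_rpow hd, Real.log_rpow hε₀,
        Real.log_rpow two_pos, Real.log_rpow two_pos]
      ring
    rw [e1, e2, hloga (n + 1), hloga n, hlogε n]
    push_cast
    nlinarith [mul_nonneg (mul_nonneg (Nat.cast_nonneg n : (0:ℝ) ≤ n)
      (by linarith : (0:ℝ) ≤ (β₂ - α₂) * q - α₂ * p - 1)) l2.le]
  -- summand bound in ℝ≥0∞
  have hsummand : ∀ n : ℕ, b (n + 1) * P (T n)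
      ≤ ENNReal.ofReal (K * (2:ℝ) ^ (-(n:ℝ))) := by
    intro n
    have h2 : ENNReal.ofReal ((a (n + 1)) ^ (-p) / (a n) ^ q)
        * (ENNReal.ofReal ((a n) ^ q) * P (T n))
        ≤ ENNReal.ofReal ((a (n + 1)) ^ (-p) / (a n) ^ q)
          * ENNReal.ofReal (C * (ε' n) ^ (β₂ * q)) :=
      mul_le_mul_right (hmarkov n) _
    have h3 : ENNReal.ofReal ((a (n + 1)) ^ (-p) / (a n) ^ q)
        * ENNReal.ofReal ((a n) ^ q) = b (n + 1) := by
      rw [← ENNReal.ofReal_mul (by positivity)]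
      congr 1
      exact div_mul_cancel₀ _ (Real.rpow_pos_of_pos (hapos n) q).ne'
    rw [← mul_assoc, h3] at h2
    refine h2.trans ?_
    rw [← ENNReal.ofReal_mul (by positivity)]
    exact ENNReal.ofReal_le_ofReal (halg n)
  -- assemble
  rw [hgeq]
  have hgeom : ∀ n : ℕ, ENNReal.ofReal (K * (2:ℝ) ^ (-(n:ℝ)))
      = ENNReal.ofReal K * (ENNReal.ofReal (2⁻¹)) ^ n := by
    intro n
    rw [ENNReal.ofReal_mul hKpos.le]
    congr 1
    rw [← ENNReal.ofReal_pow (by norm_num : (0:ℝ) ≤ 2⁻¹)]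
    congr 1
    rw [Real.rpow_neg (by norm_num : (0:ℝ) ≤ 2), Real.rpow_natCast, ← inv_pow]
  calc ∫⁻ ω, g ω ∂P
      ≤ ∫⁻ ω, (b 0 + ∑' n, (T n).indicator (fun _ => b (n + 1)) ω) ∂P :=
        lintegral_mono hpt
    _ = b 0 * P Set.univ + ∑' n, b (n + 1) * P (T n) := by
        rw [lintegral_add_left measurable_const,
          lintegral_const,
          lintegral_tsum (fun n => (measurable_const.indicator (hTm n)).aemeasurable)]
        congr 1
        exact tsum_congr fun n => lintegral_indicator_const (hTm n) _
    _ ≤ b 0 * P Set.univ + ∑' (n : ℕ), ENNReal.ofReal (K * (2:ℝ) ^ (-(n:ℝ))) :=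
        add_le_add_right (ENNReal.tsum_le_tsum hsummand) _
    _ < ⊤ := by
        rw [ENNReal.add_lt_top]
        constructor
        · exact ENNReal.mul_lt_top ENNReal.ofReal_lt_top (measure_lt_top _ _)
        · rw [tsum_congr hgeom, ENNReal.tsum_mul_left, ENNReal.tsum_geometric]
          refine ENNReal.mul_lt_top ENNReal.ofReal_lt_top ?_
          rw [ENNReal.inv_lt_top, tsub_pos_iff_lt]
          exact ENNReal.ofReal_lt_one.mpr (by norm_num)
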